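/- Let r ≥ 1 and let P = conv V be a polytope in ℝ^N of dimension at least r, where V is exactly the set of extreme points (vertices) of P. Call two distinct vertices u, v ∈ V adjacent if the segment conv{u, v} is a face of P, and assume the 1-skeleton of P is triangle-free: no three distinct vertices are pairwise adjacent. Then for every function f : ℝ^N → ℝ continuous on P there exist r pairwise disjoint faces F_1, …, F_r of P whose images f(F_1), …, f(F_r) have a common point. -/

import Mathlib

open Finset Module
open scoped Classical

set_option maxHeartbeats 1000000
noncomputable section

set_option linter.unusedSectionVars false
variable {E : Type*} [NormedAddCommGroup E] [InnerProductSpace ℝ E] [FiniteDimensional ℝ E]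

local notation "⟪" x ", " y "⟫" => inner (𝕜 := ℝ) x y

/-- vertex-set hypothesis -/
def IsVert (V : Finset E) : Prop :=
  (V : Set E) = Set.extremePoints ℝ (convexHull ℝ (V : Set E))

/-- set of maximizers of a functional over `V` -/
def mxS (V : Finset E) (l : E →L[ℝ] ℝ) : Finset E :=
  V.filter fun v => ∀ u ∈ V, l u ≤ l v

lemma mxS_subset (V : Finset E) (l : E →L[ℝ] ℝ) : mxS V l ⊆ V := Finset.filter_subset _ _

lemma mxS_nonempty {V : Finset E} (hV : V.Nonempty) (l : E →L[ℝ] ℝ) : (mxS V l).Nonempty := by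
  obtain ⟨v, hv, hmax⟩ := V.exists_max_image l hV
  exact ⟨v, by simpa [mxS, hv] using hmax⟩

lemma le_on_hull {V : Finset E} {l : E →L[ℝ] ℝ} {v : E} (hv : v ∈ mxS V l)
    {x : E} (hx : x ∈ convexHull ℝ (V : Set E)) : l x ≤ l v := by
  simp only [mxS, Finset.mem_filter] at hv
  have : convexHull ℝ (V : Set E) ⊆ {w | l w ≤ l v} := by
    apply convexHull_min
    · intro u hu; exact hv.2 u (by exact_mod_cast hu)
    · exact convex_halfSpace_le (l.toLinearMap.isLinear) _
  exact this hx

lemma hull_mxS_eq (V : Finset E) (l : E →L[ℝ] ℝ) (hne : (mxS V l).Nonempty) :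
    convexHull ℝ ((mxS V l : Finset E) : Set E)
      = {x ∈ convexHull ℝ (V : Set E) | ∀ y ∈ convexHull ℝ (V : Set E), l y ≤ l x} := by
  obtain ⟨v₀, hv₀⟩ := hne
  have hconst : ∀ x ∈ mxS V l, l x = l v₀ := by
    intro x hx
    have h1 : l x ≤ l v₀ := by
      simp only [mxS, Finset.mem_filter] at hv₀ hx
      exact hv₀.2 x hx.1
    have h2 : l v₀ ≤ l x := by
      simp only [mxS, Finset.mem_filter] at hv₀ hx
      exact hx.2 v₀ hv₀.1
    linarith
  apply Set.Subset.antisymm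
  · intro x hx
    have hxV : x ∈ convexHull ℝ (V : Set E) :=
      convexHull_mono (by exact_mod_cast mxS_subset V l) hx
    have hxval : l x = l v₀ := by
      -- conv of mxS lies in the hyperplane l = l v₀
      have : convexHull ℝ ((mxS V l : Finset E) : Set E) ⊆ {w | l w = l v₀} := by
        apply convexHull_min
        · intro u hu; exact hconst u (by exact_mod_cast hu)
        · have : {w | l w = l v₀} = {w | l w ≤ l v₀} ∩ {w | l v₀ ≤ l w} := by
            ext w; simp [le_antisymm_iff]
          rw [this]
          exact (convex_halfSpace_le (l.toLinearMap.isLinear) _).inter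
            (convex_halfSpace_ge (l.toLinearMap.isLinear) _)
      exact this hx
    refine ⟨hxV, fun y hy => ?_⟩
    rw [hxval]
    exact le_on_hull hv₀ hy
  · rintro x ⟨hx, hmax⟩
    have hxval : l x = l v₀ := le_antisymm (le_on_hull hv₀ hx)
      (hmax v₀ (subset_convexHull ℝ _ (by exact_mod_cast mxS_subset V l hv₀)))
    rw [Finset.convexHull_eq] at hx
    obtain ⟨w, hw0, hw1, hwx⟩ := hx
    -- every vertex with positive weight is a maximizer
    have hsupp : ∀ y ∈ V, w y ≠ 0 → y ∈ mxS V l := by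
      intro y hy hwy
      by_contra hymx
      have hylt : l y < l v₀ := by
        simp only [mxS, Finset.mem_filter] at hymx
        push_neg at hymx
        obtain ⟨u, hu, hlt⟩ := hymx hy
        calc l y < l u := hlt
          _ ≤ l v₀ := le_on_hull hv₀ (subset_convexHull ℝ _ (by exact_mod_cast hu))
      have hle : ∀ z ∈ V, w z * l z ≤ w z * l v₀ := by
        intro z hz
        exact mul_le_mul_of_nonneg_left
          (le_on_hull hv₀ (subset_convexHull ℝ _ (by exact_mod_cast hz))) (hw0 z hz)
      have hstrict : ∑ z ∈ V, w z * l z < ∑ z ∈ V, w z * l v₀ := by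
        apply Finset.sum_lt_sum hle
        exact ⟨y, hy, mul_lt_mul_of_pos_left hylt (lt_of_le_of_ne (hw0 y hy) (Ne.symm hwy))⟩
      have hsum : ∑ z ∈ V, w z * l z = l x := by
        rw [← hwx, Finset.centerMass_eq_of_sum_1 _ _ hw1, map_sum]
        simp
      rw [hsum, hxval] at hstrict
      have : ∑ z ∈ V, w z * l v₀ = l v₀ := by
        rw [← Finset.sum_mul, hw1, one_mul]
      rw [this] at hstrict
      exact lt_irrefl _ hstrict
    rw [← hwx, ← Finset.centerMass_filter_ne_zero (w := w) id]
    apply Finset.centerMass_mem_convexHull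
    · intro i hi; exact hw0 i (Finset.mem_filter.1 hi).1
    · rw [Finset.sum_filter_ne_zero, hw1]; norm_num
    · intro i hi
      have hi' := Finset.mem_filter.1 hi
      exact Finset.mem_coe.2 (hsupp i hi'.1 hi'.2)

lemma isExposed_mxS (V : Finset E) (l : E →L[ℝ] ℝ) :
    IsExposed ℝ (convexHull ℝ (V : Set E)) (convexHull ℝ ((mxS V l : Finset E) : Set E)) := by
  intro hne
  refine ⟨l, ?_⟩
  have hmx : (mxS V l).Nonempty := by
    by_contra h
    rw [Finset.not_nonempty_iff_eq_empty] at h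
    rw [h] at hne
    simp at hne
  rw [hull_mxS_eq V l hmx]

lemma extremePoints_mono {A B : Set E} {x : E} (hx : x ∈ Set.extremePoints ℝ B)
    (hxA : x ∈ A) (hAB : A ⊆ B) : x ∈ Set.extremePoints ℝ A := by
  rw [mem_extremePoints] at hx ⊢
  exact ⟨hxA, fun x₁ h₁ x₂ h₂ hseg => hx.2 x₁ (hAB h₁) x₂ (hAB h₂) hseg⟩

lemma isVert_subset {V S : Finset E} (hV : IsVert V) (hSV : S ⊆ V)
    (hS : ∀ v ∈ S, ∀ u ∈ V, u ∈ convexHull ℝ (S : Set E) → True) : True := trivial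

lemma isVert_mxS {V : Finset E} (hV : IsVert V) (l : E →L[ℝ] ℝ) : IsVert (mxS V l) := by
  apply Set.Subset.antisymm
  · intro v hv
    have hvV : v ∈ (V : Set E) := by
      exact_mod_cast mxS_subset V l (by exact_mod_cast hv)
    have hvext : v ∈ Set.extremePoints ℝ (convexHull ℝ (V : Set E)) := hV ▸ hvV
    exact extremePoints_mono hvext (subset_convexHull ℝ _ hv)
      (convexHull_mono (by exact_mod_cast mxS_subset V l))
  · exact extremePoints_convexHull_subset

lemma not_mem_hull_erase {V : Finset E} (hV : IsVert V) {v : E} (hv : v ∈ V) :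
    v ∉ convexHull ℝ ((V.erase v : Finset E) : Set E) := by
  intro hmem
  have heq : convexHull ℝ ((V.erase v : Finset E) : Set E) = convexHull ℝ (V : Set E) := by
    apply Set.Subset.antisymm (convexHull_mono (by exact_mod_cast Finset.erase_subset v V))
    apply convexHull_min _ (convex_convexHull ℝ _)
    intro u hu
    rcases eq_or_ne u v with rfl | hne
    · exact hmem
    · exact subset_convexHull ℝ _ (by
        exact_mod_cast Finset.mem_erase.2 ⟨hne, by exact_mod_cast hu⟩)
  have hvext : v ∈ Set.extremePoints ℝ (convexHull ℝ (V : Set E)) := hV ▸ (by exact_mod_cast hv)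
  rw [← heq] at hvext
  have := extremePoints_convexHull_subset hvext
  rw [Finset.coe_erase] at this
  exact this.2 rfl

lemma sep_vertex {V : Finset E} (hV : IsVert V) {v : E} (hv : v ∈ V) :
    ∃ h : E →L[ℝ] ℝ, ∀ u ∈ V, u ≠ v → h u < h v := by
  have hclosed : IsClosed (convexHull ℝ ((V.erase v : Finset E) : Set E)) :=
    (Set.Finite.isCompact_convexHull ℝ (Finset.finite_toSet _)).isClosed
  have hconv : Convex ℝ (convexHull ℝ ((V.erase v : Finset E) : Set E)) := convex_convexHull ℝ _
  obtain ⟨g, u₀, hg1, hg2⟩ :=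
    geometric_hahn_banach_closed_point hconv hclosed (not_mem_hull_erase hV hv)
  refine ⟨g, fun u hu hne => ?_⟩
  calc g u < u₀ := hg1 u (subset_convexHull ℝ _ (by exact_mod_cast Finset.mem_erase.2 ⟨hne, hu⟩))
    _ < g v := hg2

lemma mxS_eq_singleton {V : Finset E} {v : E} (hv : v ∈ V) {h : E →L[ℝ] ℝ}
    (hsep : ∀ u ∈ V, u ≠ v → h u < h v) : mxS V h = {v} := by
  ext u
  simp only [mxS, Finset.mem_filter, Finset.mem_singleton]
  constructor
  · rintro ⟨huV, hmax⟩
    by_contra hne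
    exact absurd (hmax v hv) (not_le.2 (hsep u huV hne))
  · rintro rfl
    refine ⟨hv, fun w hw => ?_⟩
    rcases eq_or_ne w u with rfl | hne
    · exact le_refl _
    · exact le_of_lt (hsep w hw hne)

/-- skeleton adjacency via argmax pairs -/
def Adj (V : Finset E) (u v : E) : Prop :=
  u ≠ v ∧ ∃ l : E →L[ℝ] ℝ, mxS V l = {u, v}

lemma Adj.symm' {V : Finset E} {u v : E} (h : Adj V u v) : Adj V v u := by
  obtain ⟨hne, l, hl⟩ := h
  exact ⟨hne.symm, l, by rwa [Finset.pair_comm]⟩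

lemma adj_symm (V : Finset E) : Symmetric (Adj V) := fun _ _ h => h.symm'

lemma Adj.mem_left {V : Finset E} {u v : E} (h : Adj V u v) : u ∈ V := by
  obtain ⟨_, l, hl⟩ := h
  have : u ∈ mxS V l := by rw [hl]; simp
  exact mxS_subset V l this

lemma Adj.mem_right {V : Finset E} {u v : E} (h : Adj V u v) : v ∈ V := h.symm'.mem_left

lemma Adj.isExposed {V : Finset E} {u v : E} (h : Adj V u v) :
    IsExposed ℝ (convexHull ℝ (V : Set E)) (convexHull ℝ ({u, v} : Set E)) := by
  obtain ⟨hne, l, hl⟩ := h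
  have := isExposed_mxS V l
  rw [hl] at this
  have hco : (({u, v} : Finset E) : Set E) = ({u, v} : Set E) := by simp
  rwa [hco] at this

lemma vertex_isExposed {V : Finset E} (hV : IsVert V) {v : E} (hv : v ∈ V) :
    IsExposed ℝ (convexHull ℝ (V : Set E)) ({v} : Set E) := by
  obtain ⟨h, hsep⟩ := sep_vertex hV hv
  have := isExposed_mxS V h
  rw [mxS_eq_singleton hv hsep] at this
  simpa using this

lemma genvec (Z : Finset E) (hZ : ∀ z ∈ Z, z ≠ 0) :
    ∃ y : E, ∀ z ∈ Z, ⟪y, z⟫ ≠ 0 := by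
  classical
  induction Z using Finset.induction_on with
  | empty => exact ⟨0, fun z hz => absurd hz (by simp)⟩
  | @insert a s ha ih =>
    obtain ⟨y, hy⟩ := ih (fun z hz => hZ z (Finset.mem_insert_of_mem hz))
    have hane : a ≠ 0 := hZ a (Finset.mem_insert_self a s)
    obtain ⟨t, ht⟩ := Infinite.exists_notMem_finset
      ((insert a s).image fun z => -(⟪y, z⟫) / ⟪a, z⟫)
    refine ⟨y + t • a, fun z hz => ?_⟩
    have hips : ⟪y + t • a, z⟫ = ⟪y, z⟫ + t * ⟪a, z⟫ := by
      rw [inner_add_left, real_inner_smul_left]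
    rw [hips]
    rcases eq_or_ne (⟪a, z⟫) 0 with hz0 | hz0
    · have hzs : z ∈ s := by
        rcases Finset.mem_insert.1 hz with rfl | hzs
        · exact absurd (inner_self_eq_zero.1 hz0) hane
        · exact hzs
      simp [hz0, hy z hzs]
    · intro hcon
      apply ht
      refine Finset.mem_image.2 ⟨z, hz, ?_⟩
      field_simp
      linarith [hcon]

lemma extreme_nondegenerate {V : Finset E} (hV : IsVert V) {v w₁ w₂ : E} (hv : v ∈ V)
    (h1 : w₁ ∈ V) (h2 : w₂ ∈ V) {a b : ℝ} (ha : 0 < a) (hb : 0 < b)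
    (hne : w₁ ≠ w₂) (hv1 : w₁ ≠ v) (hv2 : w₂ ≠ v)
    (hz : (a - b) • v - a • w₁ + b • w₂ = 0) : False := by
  have hvh : v ∈ convexHull ℝ (V : Set E) := subset_convexHull ℝ _ (by exact_mod_cast hv)
  have h1h : w₁ ∈ convexHull ℝ (V : Set E) := subset_convexHull ℝ _ (by exact_mod_cast h1)
  have h2h : w₂ ∈ convexHull ℝ (V : Set E) := subset_convexHull ℝ _ (by exact_mod_cast h2)
  rcases lt_trichotomy a b with hab | hab | hab
  · -- w₂ ∈ openSegment v w₁
    have hext : w₂ ∈ Set.extremePoints ℝ (convexHull ℝ (V : Set E)) :=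
      hV ▸ (by exact_mod_cast h2)
    have hseg : w₂ ∈ openSegment ℝ v w₁ := by
      refine ⟨(b - a) / b, a / b, div_pos (sub_pos.2 hab) hb, div_pos ha hb, ?_, ?_⟩
      · field_simp; ring
      · have hbne : b ≠ 0 := ne_of_gt hb
        have : b • (((b - a) / b) • v + (a / b) • w₁) = b • w₂ := by
          rw [smul_add, smul_smul, smul_smul]
          rw [mul_div_cancel₀ _ hbne, mul_div_cancel₀ _ hbne]
          linear_combination (norm := module) -hz
        exact smul_right_injective E hbne this
    obtain ⟨_, h2eq⟩ := (mem_extremePoints.1 hext).2 v hvh w₁ h1h hseg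
    exact hne h2eq
  · subst hab
    apply hne
    have h0 : a • (w₂ - w₁) = 0 := by
      rw [smul_sub]
      linear_combination (norm := module) hz
    rcases smul_eq_zero.1 h0 with h' | h'
    · exact absurd h' (ne_of_gt ha)
    · exact (sub_eq_zero.1 h').symm
  · -- w₁ ∈ openSegment v w₂
    have hext : w₁ ∈ Set.extremePoints ℝ (convexHull ℝ (V : Set E)) :=
      hV ▸ (by exact_mod_cast h1)
    have hseg : w₁ ∈ openSegment ℝ v w₂ := by
      refine ⟨(a - b) / a, b / a, div_pos (sub_pos.2 hab) ha, div_pos hb ha, ?_, ?_⟩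
      · field_simp; ring
      · have hane : a ≠ 0 := ne_of_gt ha
        have : a • (((a - b) / a) • v + (b / a) • w₂) = a • w₁ := by
          rw [smul_add, smul_smul, smul_smul]
          rw [mul_div_cancel₀ _ hane, mul_div_cancel₀ _ hane]
          linear_combination (norm := module) hz
        exact smul_right_injective E hane this
    obtain ⟨hveq, _⟩ := (mem_extremePoints.1 hext).2 v hvh w₂ h2h hseg
    exact hv1 hveq.symm

lemma improving_edge {V : Finset E} (hV : IsVert V) {v : E} (hv : v ∈ V)
    (l₀ : E →L[ℝ] ℝ) (h0 : ∃ u ∈ V, l₀ v < l₀ u) :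
    ∃ w ∈ V, l₀ v < l₀ w ∧ Adj V v w := by
  classical
  obtain ⟨h, hsep⟩ := sep_vertex hV hv
  set U : Finset E := V.filter (fun u => l₀ v < l₀ u) with hU
  have hUne : U.Nonempty := by
    obtain ⟨u, hu, hlt⟩ := h0; exact ⟨u, by simp [hU, hu, hlt]⟩
  have hUV : U ⊆ V := Finset.filter_subset _ _
  have hUlt : ∀ u ∈ U, l₀ v < l₀ u := fun u hu => (Finset.mem_filter.1 hu).2
  have hveq : ∀ u ∈ U, u ≠ v := by
    intro u hu hequ
    exact absurd (hUlt u hu) (by rw [hequ]; exact lt_irrefl _)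
  set zf : E × E → E := fun p =>
    ((l₀ p.2 - l₀ v) - (l₀ p.1 - l₀ v)) • v - (l₀ p.2 - l₀ v) • p.1 + (l₀ p.1 - l₀ v) • p.2
    with hzf
  have key : ∀ p ∈ U.offDiag, zf p ≠ 0 := by
    rintro ⟨w₁, w₂⟩ hp hz0
    obtain ⟨hw₁, hw₂, hne⟩ := Finset.mem_offDiag.1 hp
    exact extreme_nondegenerate hV hv (hUV hw₁) (hUV hw₂)
      (sub_pos.2 (hUlt w₂ hw₂)) (sub_pos.2 (hUlt w₁ hw₁)) hne (hveq _ hw₁) (hveq _ hw₂) hz0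
  obtain ⟨y, hy⟩ := genvec ((U.offDiag).image zf) (by
    intro z hz
    obtain ⟨p, hp, rfl⟩ := Finset.mem_image.1 hz
    exact key p hp)
  set m : E → ℝ := fun x => ⟪y, x⟫ with hm
  set Af : E × E → ℝ := fun p =>
    (h v - h p.1) * (l₀ p.2 - l₀ v) - (h v - h p.2) * (l₀ p.1 - l₀ v) with hAf
  set Bf : E × E → ℝ := fun p =>
    (m v - m p.1) * (l₀ p.2 - l₀ v) - (m v - m p.2) * (l₀ p.1 - l₀ v) with hBf
  have hBf_ne : ∀ p ∈ U.offDiag, Bf p ≠ 0 := by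
    intro p hp
    have hBz : Bf p = ⟪y, zf p⟫ := by
      simp only [hBf, hm, hzf, inner_add_right, inner_sub_right, real_inner_smul_right]
      ring
    rw [hBz]
    exact hy _ (Finset.mem_image_of_mem zf hp)
  set bad : Finset ℝ := (U.offDiag).image (fun p => -Af p / Bf p) with hbad
  obtain ⟨u₁, hu₁⟩ := hUne
  have hVe : (V.erase v).Nonempty := ⟨u₁, Finset.mem_erase.2 ⟨hveq u₁ hu₁, hUV hu₁⟩⟩
  set δ : ℝ := (V.erase v).inf' hVe (fun u => (h v - h u) / (|m u - m v| + 1)) with hδ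
  have hδpos : 0 < δ := by
    rw [hδ, Finset.lt_inf'_iff]
    intro u hu
    obtain ⟨hune, huV⟩ := Finset.mem_erase.1 hu
    exact div_pos (sub_pos.2 (hsep u huV hune)) (by positivity)
  obtain ⟨ε, hεmem, hεbad⟩ := (Set.Ioo_infinite hδpos).exists_notMem_finset bad
  obtain ⟨hε0, hεδ⟩ := hεmem
  set h' : E →L[ℝ] ℝ := h + ε • (innerSL ℝ y) with hh'
  have hh'app : ∀ x, h' x = h x + ε * m x := by
    intro x; simp [hh', hm]
  have hsep' : ∀ u ∈ V, u ≠ v → h' u < h' v := by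
    intro u hu hne
    have hle : δ ≤ (h v - h u) / (|m u - m v| + 1) :=
      Finset.inf'_le _ (Finset.mem_erase.2 ⟨hne, hu⟩)
    have h1 : ε * (m u - m v) ≤ ε * |m u - m v| :=
      mul_le_mul_of_nonneg_left (le_abs_self _) (le_of_lt hε0)
    have h2 : ε * |m u - m v| < δ * (|m u - m v| + 1) := by
      calc ε * |m u - m v| ≤ ε * (|m u - m v| + 1) :=
            mul_le_mul_of_nonneg_left (by linarith [abs_nonneg (m u - m v)]) hε0.le
        _ < δ * (|m u - m v| + 1) := by
            exact mul_lt_mul_of_pos_right hεδ (by positivity)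
    have h3 : δ * (|m u - m v| + 1) ≤ h v - h u := by
      calc δ * (|m u - m v| + 1)
          ≤ ((h v - h u) / (|m u - m v| + 1)) * (|m u - m v| + 1) :=
            mul_le_mul_of_nonneg_right hle (by positivity)
        _ = h v - h u := div_mul_cancel₀ _ (by positivity)
    have hexp : ε * (m u - m v) = ε * m u - ε * m v := by ring
    rw [hh'app, hh'app]
    linarith
  set ratio : E → ℝ := fun u => (h' v - h' u) / (l₀ u - l₀ v) with hratio
  have hratiopos : ∀ u ∈ U, 0 < ratio u := fun u hu =>
    div_pos (sub_pos.2 (hsep' u (hUV hu) (hveq u hu))) (sub_pos.2 (hUlt u hu))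
  obtain ⟨w, hwU, hws⟩ := Finset.exists_mem_eq_inf' (⟨u₁, hu₁⟩ : U.Nonempty) ratio
  set s : ℝ := U.inf' ⟨u₁, hu₁⟩ ratio with hs
  have hdistinct : ∀ p ∈ U.offDiag, ratio p.1 ≠ ratio p.2 := by
    rintro ⟨p1, p2⟩ hp hequ
    obtain ⟨hp1, hp2, hpne⟩ := Finset.mem_offDiag.1 hp
    apply hεbad
    have hB := hBf_ne _ hp
    have hd1 : (0:ℝ) < l₀ p1 - l₀ v := sub_pos.2 (hUlt _ hp1)
    have hd2 : (0:ℝ) < l₀ p2 - l₀ v := sub_pos.2 (hUlt _ hp2)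
    simp only [hratio] at hequ
    rw [div_eq_div_iff (ne_of_gt hd1) (ne_of_gt hd2)] at hequ
    simp only [hh'app] at hequ
    have hAB : Af (p1, p2) + ε * Bf (p1, p2) = 0 := by
      simp only [hAf, hBf]
      linear_combination hequ
    refine Finset.mem_image.2 ⟨(p1, p2), hp, ?_⟩
    rw [div_eq_iff hB]
    linarith
  have hsle : ∀ u ∈ U, s ≤ ratio u := fun u hu => Finset.inf'_le ratio hu
  have huniq : ∀ u ∈ U, u ≠ w → s < ratio u := by
    intro u hu hnew
    rcases lt_or_eq_of_le (hsle u hu) with hlt | heq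
    · exact hlt
    · exact absurd (heq ▸ hws ▸ rfl : ratio u = ratio w)
        (hdistinct (u, w) (Finset.mem_offDiag.2 ⟨hu, hwU, hnew⟩))
  have hspos : 0 < s := hws ▸ hratiopos w hwU
  set g : E →L[ℝ] ℝ := h' + s • l₀ with hg
  have hgapp : ∀ x, g x = h' x + s * l₀ x := by intro x; simp [hg]
  have hgle : ∀ u ∈ V, g u ≤ g v := by
    intro u hu
    rcases eq_or_ne u v with rfl | hne
    · exact le_refl _
    by_cases huU : u ∈ U
    · have hden : 0 < l₀ u - l₀ v := sub_pos.2 (hUlt u huU)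
      have hkey : ratio u * (l₀ u - l₀ v) = h' v - h' u := by
        simp only [hratio]; exact div_mul_cancel₀ _ (ne_of_gt hden)
      have hmul : s * (l₀ u - l₀ v) ≤ ratio u * (l₀ u - l₀ v) :=
        mul_le_mul_of_nonneg_right (hsle u huU) (le_of_lt hden)
      have hexp : s * (l₀ u - l₀ v) = s * l₀ u - s * l₀ v := by ring
      rw [hgapp, hgapp]
      linarith
    · have h1 : l₀ u ≤ l₀ v := le_of_not_gt (by simpa [hU, hu] using huU)
      have h2 : h' u < h' v := hsep' u hu hne
      have hmul : s * l₀ u ≤ s * l₀ v := mul_le_mul_of_nonneg_left h1 hspos.le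
      rw [hgapp, hgapp]
      linarith
  have hgw : g w = g v := by
    have hden : 0 < l₀ w - l₀ v := sub_pos.2 (hUlt w hwU)
    have hkey : ratio w * (l₀ w - l₀ v) = h' v - h' w := by
      simp only [hratio]; exact div_mul_cancel₀ _ (ne_of_gt hden)
    rw [← hws] at hkey
    rw [hgapp, hgapp]
    linarith
  have hglt : ∀ u ∈ V, u ≠ v → u ≠ w → g u < g v := by
    intro u hu hne hnew
    by_cases huU : u ∈ U
    · have hden : 0 < l₀ u - l₀ v := sub_pos.2 (hUlt u huU)
      have hlt := huniq u huU hnew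
      have hkey : ratio u * (l₀ u - l₀ v) = h' v - h' u := by
        simp only [hratio]; exact div_mul_cancel₀ _ (ne_of_gt hden)
      have hmul : s * (l₀ u - l₀ v) < ratio u * (l₀ u - l₀ v) :=
        mul_lt_mul_of_pos_right hlt hden
      have hexp : s * (l₀ u - l₀ v) = s * l₀ u - s * l₀ v := by ring
      rw [hgapp, hgapp]
      linarith
    · have h1 : l₀ u ≤ l₀ v := le_of_not_gt (by simpa [hU, hu] using huU)
      have h2 : h' u < h' v := hsep' u hu hne
      have hmul : s * l₀ u ≤ s * l₀ v := mul_le_mul_of_nonneg_left h1 hspos.le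
      rw [hgapp, hgapp]
      linarith
  have hmx : mxS V g = {v, w} := by
    ext u
    simp only [mxS, Finset.mem_filter, Finset.mem_insert, Finset.mem_singleton]
    constructor
    · rintro ⟨huV, hmax⟩
      by_contra hcon
      push_neg at hcon
      exact absurd (hmax v hv) (not_le.2 (hglt u huV hcon.1 hcon.2))
    · rintro (rfl | rfl)
      · exact ⟨hv, fun x hx => hgle x hx⟩
      · exact ⟨hUV hwU, fun x hx => (hgle x hx).trans_eq hgw.symm⟩
  exact ⟨w, hUV hwU, hUlt w hwU, (hveq w hwU).symm, g, hmx⟩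

lemma mxS_val_eq {V : Finset E} {l : E →L[ℝ] ℝ} {p x : E} (hp : p ∈ mxS V l)
    (hx : x ∈ mxS V l) : l x = l p := by
  obtain ⟨hpV, hpm⟩ := Finset.mem_filter.1 hp
  obtain ⟨hxV, hxm⟩ := Finset.mem_filter.1 hx
  exact le_antisymm (hpm x hxV) (hxm p hpV)

lemma adj_lift {V : Finset E} (g : E →L[ℝ] ℝ) {a b : E} (h : Adj (mxS V g) a b) :
    Adj V a b := by
  classical
  obtain ⟨hne, e, he⟩ := h
  set S : Finset E := mxS V g with hS
  have haS : a ∈ S := by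
    have : a ∈ mxS S e := by rw [he]; simp
    exact mxS_subset S e this
  have hbS : b ∈ S := by
    have : b ∈ mxS S e := by rw [he]; simp
    exact mxS_subset S e this
  have hSV : S ⊆ V := mxS_subset V g
  have haV : a ∈ V := hSV haS
  have hamax : ∀ x ∈ V, g x ≤ g a := (Finset.mem_filter.1 haS).2
  have heamax : ∀ x ∈ S, e x ≤ e a := by
    intro x hx
    have : a ∈ mxS S e := by rw [he]; simp
    exact (Finset.mem_filter.1 this).2 x hx
  by_cases hdiff : (V \ S).Nonempty
  · set δ : ℝ := (V \ S).inf' hdiff (fun x => g a - g x) with hδ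
    have hδpos : 0 < δ := by
      rw [hδ, Finset.lt_inf'_iff]
      intro x hx
      obtain ⟨hxV, hxS⟩ := Finset.mem_sdiff.1 hx
      have : ¬ ∀ u ∈ V, g u ≤ g x := by
        intro hcon; exact hxS (Finset.mem_filter.2 ⟨hxV, hcon⟩)
      push_neg at this
      obtain ⟨w, hwV, hgw⟩ := this
      have := hamax w hwV
      linarith
    set Cb : ℝ := V.sup' ⟨a, haV⟩ (fun x => |e x|) with hCb
    have hCbb : ∀ x ∈ V, |e x| ≤ Cb := by
      intro x hx; rw [hCb]; exact Finset.le_sup' (fun z => |e z|) hx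
    set K : ℝ := (2 * Cb + 1) / δ with hK
    have hCb0 : 0 ≤ Cb := le_trans (abs_nonneg _) (hCbb a haV)
    have hKpos : 0 < K := div_pos (by linarith) hδpos
    set lam : E →L[ℝ] ℝ := K • g + e with hlam
    have hlamapp : ∀ x, lam x = K * g x + e x := by intro x; simp [hlam]
    have hout : ∀ x ∈ V, x ∉ S → lam x < lam a := by
      intro x hxV hxS
      have h1 : δ ≤ g a - g x := Finset.inf'_le _ (Finset.mem_sdiff.2 ⟨hxV, hxS⟩)
      have h2 : K * δ ≤ K * (g a - g x) := mul_le_mul_of_nonneg_left h1 hKpos.le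
      have h3 : K * δ = 2 * Cb + 1 := div_mul_cancel₀ _ (ne_of_gt hδpos)
      have h4 : e x ≤ Cb := (abs_le.1 (hCbb x hxV)).2
      have h5 : -Cb ≤ e a := (abs_le.1 (hCbb a haV)).1
      rw [hlamapp, hlamapp]
      nlinarith
    have hin : ∀ x ∈ S, lam x = K * g a + e x := by
      intro x hx
      rw [hlamapp, mxS_val_eq haS hx]
    refine ⟨hne, lam, ?_⟩
    ext x
    simp only [mxS, Finset.mem_filter, Finset.mem_insert, Finset.mem_singleton]
    constructor
    · rintro ⟨hxV, hxmax⟩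
      have hxS : x ∈ S := by
        by_contra hxS
        exact absurd (hxmax a haV) (not_le.2 (hout x hxV hxS))
      have hxe : ∀ z ∈ S, e z ≤ e x := by
        intro z hz
        have := hxmax z (hSV hz)
        rw [hin x hxS, hin z hz] at this
        linarith
      have : x ∈ mxS S e := Finset.mem_filter.2 ⟨hxS, hxe⟩
      rw [he] at this
      simpa using this
    · intro hx
      have hxS : x ∈ S := by rcases hx with rfl | rfl <;> [exact haS; exact hbS]
      have hxmx : x ∈ mxS S e := by rw [he]; simpa using hx
      have hxe : ∀ z ∈ S, e z ≤ e x := (Finset.mem_filter.1 hxmx).2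
      refine ⟨hSV hxS, fun z hz => ?_⟩
      by_cases hzS : z ∈ S
      · rw [hin x hxS, hin z hzS]
        have := hxe z hzS
        linarith
      · have heax : e a = e x := mxS_val_eq hxmx (by rw [he]; simp : a ∈ mxS S e)
        have hlax : lam a = lam x := by rw [hin a haS, hin x hxS, heax]
        exact le_of_lt (hlax ▸ hout z hz hzS)
  · have hSeqV : S = V := Finset.Subset.antisymm hSV (fun x hx => by
      by_contra hxS
      exact hdiff ⟨x, Finset.mem_sdiff.2 ⟨hx, hxS⟩⟩)
    exact ⟨hne, e, by rw [← hSeqV]; exact he⟩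

/-- reachability in the skeleton avoiding `D` -/
def Reach (V D : Finset E) : E → E → Prop :=
  Relation.ReflTransGen (fun a b => Adj V a b ∧ (a ∈ V ∧ a ∉ D) ∧ (b ∈ V ∧ b ∉ D))

lemma reach_symm {V D : Finset E} {x y : E} (h : Reach V D x y) : Reach V D y x :=
  (@Relation.ReflTransGen.stdSymm E (fun a b : E => Adj V a b ∧ (a ∈ V ∧ a ∉ D) ∧ (b ∈ V ∧ b ∉ D))
    (⟨fun _ _ hab => ⟨hab.1.symm', hab.2.2, hab.2.1⟩⟩)).symm _ _ h

lemma reach_trans {V D : Finset E} {x y z : E} (h1 : Reach V D x y) (h2 : Reach V D y z) :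
    Reach V D x z := Relation.ReflTransGen.trans h1 h2

lemma reach_transfer {V D : Finset E} (g : E →L[ℝ] ℝ)
    (hdisj : ∀ x ∈ mxS V g, x ∉ D) {a b : E} (h : Reach (mxS V g) ∅ a b) :
    Reach V D a b := by
  refine Relation.ReflTransGen.mono ?_ _ _ h
  rintro x y ⟨hadj, ⟨hx, -⟩, ⟨hy, -⟩⟩
  exact ⟨adj_lift g hadj, ⟨mxS_subset V g hx, hdisj x hx⟩, ⟨mxS_subset V g hy, hdisj y hy⟩⟩

lemma ascend {V : Finset E} (hV : IsVert V) (l : E →L[ℝ] ℝ) (D : Finset E) :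
    ∀ (k : ℕ) (u : E), u ∈ V → u ∉ D → (V.filter (fun x => l u < l x)).card ≤ k →
      (∀ w ∈ V, l u < l w → w ∉ D) → ∃ w ∈ mxS V l, Reach V D u w := by
  intro k
  induction k with
  | zero =>
    intro u huV huD hcard _
    refine ⟨u, ?_, Relation.ReflTransGen.refl⟩
    rw [Nat.le_zero, Finset.card_eq_zero, Finset.filter_eq_empty_iff] at hcard
    exact Finset.mem_filter.2 ⟨huV, fun x hx => le_of_not_gt (hcard hx)⟩
  | succ k ih =>
    intro u huV huD hcard hsafe
    by_cases humx : u ∈ mxS V l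
    · exact ⟨u, humx, Relation.ReflTransGen.refl⟩
    · have : ¬ ∀ x ∈ V, l x ≤ l u := fun hcon => humx (Finset.mem_filter.2 ⟨huV, hcon⟩)
      push_neg at this
      obtain ⟨x, hxV, hlt⟩ := this
      obtain ⟨w₁, hw₁V, hw₁lt, hadj⟩ := improving_edge hV huV l ⟨x, hxV, hlt⟩
      have hw₁D : w₁ ∉ D := hsafe w₁ hw₁V hw₁lt
      have hmono : V.filter (fun x => l w₁ < l x) ⊂ V.filter (fun x => l u < l x) := by
        refine Finset.ssubset_iff_of_subset (fun z hz => ?_) |>.2 ?_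
        · obtain ⟨hzV, hzlt⟩ := Finset.mem_filter.1 hz
          exact Finset.mem_filter.2 ⟨hzV, lt_trans hw₁lt hzlt⟩
        · exact ⟨w₁, Finset.mem_filter.2 ⟨hw₁V, hw₁lt⟩, by simp⟩
      have hcard' : (V.filter (fun x => l w₁ < l x)).card ≤ k := by
        have := Finset.card_lt_card hmono
        omega
      obtain ⟨w, hwmx, hreach⟩ := ih w₁ hw₁V hw₁D hcard'
        (fun z hzV hzlt => hsafe z hzV (lt_trans hw₁lt hzlt))
      refine ⟨w, hwmx, Relation.ReflTransGen.head ⟨hadj, ⟨huV, huD⟩, ⟨hw₁V, hw₁D⟩⟩ hreach⟩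

lemma vectorSpan_mxS_lt {V : Finset E} {g : E →L[ℝ] ℝ} {u v : E} (hu : u ∈ V) (hv : v ∈ V)
    (hne : g u ≠ g v) :
    finrank ℝ (vectorSpan ℝ ((mxS V g : Finset E) : Set E))
      < finrank ℝ (vectorSpan ℝ (V : Set E)) := by
  apply Submodule.finrank_lt_finrank_of_lt
  rw [SetLike.lt_iff_le_and_exists]
  constructor
  · exact vectorSpan_mono ℝ (by exact_mod_cast mxS_subset V g)
  · refine ⟨u - v, ?_, ?_⟩
    · have := vsub_mem_vectorSpan ℝ (Finset.mem_coe.2 hu) (Finset.mem_coe.2 hv)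
      simpa using this
    · intro hmem
      have hker : vectorSpan ℝ ((mxS V g : Finset E) : Set E) ≤ LinearMap.ker g.toLinearMap := by
        rw [vectorSpan_def, Submodule.span_le]
        rintro z ⟨x, hx, y, hy, rfl⟩
        simp only [SetLike.mem_coe, LinearMap.mem_ker, ContinuousLinearMap.coe_coe]
        have : g (x - y) = g x - g y := by simp
        rw [vsub_eq_sub, this, mxS_val_eq (Finset.mem_coe.1 hy) (Finset.mem_coe.1 hx), sub_self]
      have := hker hmem
      simp only [LinearMap.mem_ker, ContinuousLinearMap.coe_coe] at this
      have hgsub : g (u - v) = g u - g v := by simp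
      rw [hgsub] at this
      exact hne (by linarith)

lemma skeleton_connected :
    ∀ (n : ℕ) (V : Finset E), IsVert V → finrank ℝ (vectorSpan ℝ (V : Set E)) ≤ n →
      ∀ u ∈ V, ∀ v ∈ V, Reach V ∅ u v := by
  intro n
  induction n with
  | zero =>
    intro V hV hrk u hu v hv
    have hmem : u - v ∈ vectorSpan ℝ (V : Set E) := by
      have := vsub_mem_vectorSpan ℝ (Finset.mem_coe.2 hu) (Finset.mem_coe.2 hv)
      simpa using this
    have hbot : vectorSpan ℝ (V : Set E) = ⊥ :=
      Submodule.finrank_eq_zero.1 (Nat.le_zero.1 hrk)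
    rw [hbot, Submodule.mem_bot, sub_eq_zero] at hmem
    rw [hmem]
    exact Relation.ReflTransGen.refl
  | succ n ih =>
    intro V hV hrk u hu v hv
    rcases eq_or_ne u v with rfl | hne
    · exact Relation.ReflTransGen.refl
    set g : E →L[ℝ] ℝ := innerSL ℝ (u - v) with hg
    have hguv : g u ≠ g v := by
      intro hcon
      have : g u - g v = 0 := by linarith
      have h2 : g u - g v = ⟪u - v, u - v⟫ := by
        rw [inner_sub_right]
        simp only [hg, innerSL_apply_apply]
      rw [h2] at this
      exact hne (sub_eq_zero.1 (inner_self_eq_zero.1 this))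
    have hsafe : ∀ w ∈ V, True → w ∉ (∅ : Finset E) := fun _ _ _ => Finset.notMem_empty _
    obtain ⟨wu, hwu, hru⟩ := ascend hV g ∅ (V.filter (fun x => g u < g x)).card u hu
      (Finset.notMem_empty u) le_rfl (fun w hw _ => Finset.notMem_empty w)
    obtain ⟨wv, hwv, hrv⟩ := ascend hV g ∅ (V.filter (fun x => g v < g x)).card v hv
      (Finset.notMem_empty v) le_rfl (fun w hw _ => Finset.notMem_empty w)
    have hrkS : finrank ℝ (vectorSpan ℝ ((mxS V g : Finset E) : Set E)) ≤ n := by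
      have := vectorSpan_mxS_lt hu hv hguv
      omega
    have hconn := ih (mxS V g) (isVert_mxS hV g) hrkS wu hwu wv hwv
    have htrans := reach_transfer (D := ∅) g (fun x _ => Finset.notMem_empty x) hconn
    exact reach_trans hru (reach_trans htrans (reach_symm hrv))

lemma balinski {V : Finset E} (hV : IsVert V) (C : Finset E) (hCV : C ⊆ V)
    (hcard : C.card + 1 ≤ finrank ℝ (vectorSpan ℝ (V : Set E))) :
    ∀ u ∈ V, u ∉ C → ∀ v ∈ V, v ∉ C → Reach V C u v := by
  classical
  intro u huV huC v hvV hvC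
  set W : Submodule ℝ E := vectorSpan ℝ (V : Set E) with hW
  set φ : E →ₗ[ℝ] (↥C → ℝ) :=
    LinearMap.pi (fun c => ((innerSL ℝ ((c : E) - u)).toLinearMap)) with hφ
  set ψ : ↥W →ₗ[ℝ] (↥C → ℝ) := φ.comp W.subtype with hψ
  have hkerne : LinearMap.ker ψ ≠ ⊥ := by
    intro hcon
    have h1 := LinearMap.finrank_range_add_finrank_ker ψ
    have h2 : finrank ℝ (LinearMap.range ψ) ≤ finrank ℝ (↥C → ℝ) := Submodule.finrank_le _
    have h3 : finrank ℝ (↥C → ℝ) = C.card := by rw [Module.finrank_pi]; simp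
    rw [hcon, finrank_bot] at h1
    omega
  obtain ⟨y', hy'ker, hy'ne⟩ := Submodule.exists_mem_ne_zero_of_ne_bot hkerne
  set y : E := ((y' : ↥W) : E) with hy
  have hyW : y ∈ W := (y' : ↥W).2
  have hyne : y ≠ 0 := by
    intro hcon
    apply hy'ne
    exact Subtype.ext (by rw [hy] at hcon; rw [hcon]; rfl)
  have hyC : ∀ c ∈ C, ⟪y, (c : E)⟫ = ⟪y, u⟫ := by
    intro c hc
    have hmem := LinearMap.mem_ker.1 hy'ker
    have h1 : ψ y' ⟨c, hc⟩ = 0 := by rw [hmem]; rfl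
    have h2 : ⟪(c : E) - u, y⟫ = 0 := by
      rw [hy, inner_sub_left]
      simpa [hψ, hφ] using h1
    have h3 : ⟪y, (c : E) - u⟫ = 0 := by rwa [real_inner_comm] at h2
    have h4 : ⟪y, (c : E)⟫ - ⟪y, u⟫ = 0 := by rwa [inner_sub_right] at h3
    linarith
  set l : E →L[ℝ] ℝ := innerSL ℝ y with hl
  have hlapp : ∀ x, l x = ⟪y, x⟫ := fun x => by simp [hl]
  have hCval : ∀ c ∈ C, l c = l u := by
    intro c hc; rw [hlapp, hlapp]; exact hyC c hc
  have hnotconst : ¬ ∀ a ∈ V, ∀ b ∈ V, l a = l b := by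
    intro hcon
    apply hyne
    have hker : W ≤ LinearMap.ker l.toLinearMap := by
      rw [hW, vectorSpan_def, Submodule.span_le]
      rintro z ⟨xx, hxx, yy, hyy, rfl⟩
      simp only [SetLike.mem_coe, LinearMap.mem_ker, ContinuousLinearMap.coe_coe]
      have hsub : l (xx -ᵥ yy) = l xx - l yy := by rw [vsub_eq_sub]; simp
      rw [hsub, hcon xx (Finset.mem_coe.1 hxx) yy (Finset.mem_coe.1 hyy), sub_self]
    have h0 : l y = 0 := hker hyW
    rw [hlapp] at h0
    exact inner_self_eq_zero.1 h0
  push_neg at hnotconst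
  obtain ⟨a, ha, b, hb, hab⟩ := hnotconst
  obtain ⟨p, hp⟩ := mxS_nonempty ⟨u, huV⟩ l
  obtain ⟨q, hq⟩ := mxS_nonempty ⟨u, huV⟩ (-l)
  have hpmax : ∀ x ∈ V, l x ≤ l p := (Finset.mem_filter.1 hp).2
  have hqmin : ∀ x ∈ V, l q ≤ l x := by
    intro x hx
    have := (Finset.mem_filter.1 hq).2 x hx
    simpa using this
  have hpq : l q < l p := by
    rcases lt_or_ge (l q) (l p) with h | h
    · exact h
    · exfalso
      have hall : ∀ z ∈ V, l z = l p := fun z hz =>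
        le_antisymm (hpmax z hz) (le_trans h (hqmin z hz))
      exact hab ((hall a ha).trans (hall b hb).symm)
  have hSmaxC : l u < l p → ∀ x ∈ mxS V l, x ∉ C := by
    intro hlt x hx hxC
    have h1 : l x = l p := mxS_val_eq hp hx
    have h2 : l x = l u := hCval x hxC
    linarith
  have hSminC : l q < l u → ∀ x ∈ mxS V (-l), x ∉ C := by
    intro hlt x hx hxC
    have h1 : (-l) x = (-l) q := mxS_val_eq hq hx
    simp only [ContinuousLinearMap.neg_apply, neg_inj] at h1
    have h2 : l x = l u := hCval x hxC
    linarith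
  have hasc : l u < l p → ∀ x ∈ V, x ∉ C → l u ≤ l x →
      ∃ w ∈ mxS V l, Reach V C x w := by
    intro hlt x hxV hxC hxge
    apply ascend hV l C _ x hxV hxC le_rfl
    intro w hwV hwlt hwC
    have := hCval w hwC
    linarith
  have hdesc : l q < l u → ∀ x ∈ V, x ∉ C → l x ≤ l u →
      ∃ w ∈ mxS V (-l), Reach V C x w := by
    intro hlt x hxV hxC hxle
    apply ascend hV (-l) C _ x hxV hxC le_rfl
    intro w hwV hwlt hwC
    have h1 : l w < l x := by
      simp only [ContinuousLinearMap.neg_apply, neg_lt_neg_iff] at hwlt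
      exact hwlt
    have := hCval w hwC
    linarith
  have hmaxconn : ∀ w ∈ mxS V l, ∀ w' ∈ mxS V l, Reach (mxS V l) ∅ w w' :=
    fun w hw w' hw' => skeleton_connected
      (finrank ℝ (vectorSpan ℝ ((mxS V l : Finset E) : Set E)))
      (mxS V l) (isVert_mxS hV l) le_rfl w hw w' hw'
  have hminconn : ∀ w ∈ mxS V (-l), ∀ w' ∈ mxS V (-l), Reach (mxS V (-l)) ∅ w w' :=
    fun w hw w' hw' => skeleton_connected
      (finrank ℝ (vectorSpan ℝ ((mxS V (-l) : Finset E) : Set E)))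
      (mxS V (-l)) (isVert_mxS hV (-l)) le_rfl w hw w' hw'
  have hconnU : ∀ x ∈ V, x ∉ C → Reach V C x u := by
    intro x hxV hxC
    rcases le_or_gt (l u) (l x) with hge | hlt2
    · rcases lt_or_ge (l u) (l p) with hlt | hle
      · obtain ⟨w, hw, hr⟩ := hasc hlt x hxV hxC hge
        obtain ⟨w', hw', hr'⟩ := hasc hlt u huV huC le_rfl
        have h3 := reach_transfer (D := C) l (hSmaxC hlt) (hmaxconn w hw w' hw')
        exact reach_trans hr (reach_trans h3 (reach_symm hr'))
      · have hxu : l x ≤ l u := le_trans (hpmax x hxV) hle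
        have hql : l q < l u := lt_of_lt_of_le hpq hle
        obtain ⟨w, hw, hr⟩ := hdesc hql x hxV hxC hxu
        obtain ⟨w', hw', hr'⟩ := hdesc hql u huV huC le_rfl
        have h3 := reach_transfer (D := C) (-l) (hSminC hql) (hminconn w hw w' hw')
        exact reach_trans hr (reach_trans h3 (reach_symm hr'))
    · have hql : l q < l u := lt_of_le_of_lt (hqmin x hxV) hlt2
      obtain ⟨w, hw, hr⟩ := hdesc hql x hxV hxC hlt2.le
      obtain ⟨w', hw', hr'⟩ := hdesc hql u huV huC le_rfl
      have h3 := reach_transfer (D := C) (-l) (hSminC hql) (hminconn w hw w' hw')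
      exact reach_trans hr (reach_trans h3 (reach_symm hr'))
  exact reach_symm (hconnU v hvV hvC)

lemma hull_mxS_level {V : Finset E} {l : E →L[ℝ] ℝ} {p : E} (hp : p ∈ mxS V l) :
    ∀ x ∈ convexHull ℝ ((mxS V l : Finset E) : Set E), l x = l p := by
  intro x hx
  have hsub : convexHull ℝ ((mxS V l : Finset E) : Set E) ⊆ {w | l w = l p} := by
    apply convexHull_min
    · intro z hz
      exact mxS_val_eq hp (Finset.mem_coe.1 hz)
    · have heq : {w | l w = l p} = {w | l w ≤ l p} ∩ {w | l p ≤ l w} := by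
        ext w; simp [le_antisymm_iff]
      rw [heq]
      exact (convex_halfSpace_le (l.toLinearMap.isLinear) _).inter
        (convex_halfSpace_ge (l.toLinearMap.isLinear) _)
  exact hsub hx

lemma hull_mxS_disjoint {V : Finset E} {l₁ l₂ : E →L[ℝ] ℝ}
    (h : ∀ x, x ∈ mxS V l₁ → x ∈ mxS V l₂ → False) :
    Disjoint (convexHull ℝ ((mxS V l₁ : Finset E) : Set E))
      (convexHull ℝ ((mxS V l₂ : Finset E) : Set E)) := by
  rw [Set.disjoint_left]
  intro x hx1 hx2
  rcases Finset.eq_empty_or_nonempty (mxS V l₁) with he | ⟨p₁, hp₁⟩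
  · rw [he] at hx1; simp at hx1
  rcases Finset.eq_empty_or_nonempty (mxS V l₂) with he | ⟨p₂, hp₂⟩
  · rw [he] at hx2; simp at hx2
  have hVne : V.Nonempty := ⟨p₁, mxS_subset V l₁ hp₁⟩
  obtain ⟨w, hw⟩ := mxS_nonempty hVne (l₁ + l₂)
  have hxV : x ∈ convexHull ℝ (V : Set E) :=
    convexHull_mono (by exact_mod_cast mxS_subset V l₁) hx1
  have hx1v : l₁ x = l₁ p₁ := hull_mxS_level hp₁ x hx1
  have hx2v : l₂ x = l₂ p₂ := hull_mxS_level hp₂ x hx2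
  have hwx : (l₁ + l₂) x ≤ (l₁ + l₂) w := le_on_hull hw hxV
  have hw1 : l₁ w ≤ l₁ p₁ := (Finset.mem_filter.1 hp₁).2 w (mxS_subset V _ hw)
  have hw2 : l₂ w ≤ l₂ p₂ := (Finset.mem_filter.1 hp₂).2 w (mxS_subset V _ hw)
  simp only [ContinuousLinearMap.add_apply] at hwx
  have he1 : l₁ w = l₁ p₁ := by linarith
  have he2 : l₂ w = l₂ p₂ := by linarith
  apply h w
  · refine Finset.mem_filter.2 ⟨mxS_subset V _ hw, fun z hz => ?_⟩
    rw [he1]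
    exact (Finset.mem_filter.1 hp₁).2 z hz
  · refine Finset.mem_filter.2 ⟨mxS_subset V _ hw, fun z hz => ?_⟩
    rw [he2]
    exact (Finset.mem_filter.1 hp₂).2 z hz

lemma ivt_edge {V : Finset E} {f : E → ℝ} (hf : ContinuousOn f (convexHull ℝ (V : Set E)))
    {a b : E} (ha : a ∈ V) (hb : b ∈ V) {t : ℝ} (hfa : f a ≤ t) (hfb : t ≤ f b) :
    t ∈ f '' convexHull ℝ ({a, b} : Set E) := by
  have hsub : convexHull ℝ ({a, b} : Set E) ⊆ convexHull ℝ (V : Set E) := by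
    apply convexHull_mono
    intro z hz
    rcases hz with rfl | hz
    · exact_mod_cast ha
    · rw [Set.mem_singleton_iff] at hz; subst hz; exact_mod_cast hb
  have hcont : ContinuousOn f (convexHull ℝ ({a, b} : Set E)) := hf.mono hsub
  have hpre : IsPreconnected (f '' convexHull ℝ ({a, b} : Set E)) :=
    (convex_convexHull ℝ _).isPreconnected.image f hcont
  have hmema : f a ∈ f '' convexHull ℝ ({a, b} : Set E) :=
    ⟨a, subset_convexHull ℝ _ (by simp), rfl⟩
  have hmemb : f b ∈ f '' convexHull ℝ ({a, b} : Set E) :=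
    ⟨b, subset_convexHull ℝ _ (by simp), rfl⟩
  exact hpre.ordConnected.out hmema hmemb ⟨hfa, hfb⟩

lemma matching_or_cover (A : Finset E) (Nb : E → Finset E)
    (ρ : ℕ) (hρA : ρ ≤ A.card) :
    (∃ g : Fin ρ → E × E, (∀ i, (g i).1 ∈ A ∧ (g i).2 ∈ Nb (g i).1) ∧
        (∀ i j, i ≠ j → (g i).1 ≠ (g j).1 ∧ (g i).2 ≠ (g j).2)) ∨
      (∃ Cv : Finset E, Cv.card < ρ ∧ ∀ a ∈ A, ∀ b ∈ Nb a, a ∈ Cv ∨ b ∈ Cv) := by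
  classical
  rcases Nat.eq_zero_or_pos ρ with rfl | hρpos
  · exact Or.inl ⟨fun i => i.elim0, fun i => i.elim0, fun i => i.elim0⟩
  set k : ℕ := A.card - ρ with hk
  set t : ↥A → Finset (E ⊕ Fin k) := fun a =>
    ((Nb (a : E)).map ⟨Sum.inl, Sum.inl_injective⟩) ∪
      ((Finset.univ : Finset (Fin k)).map ⟨Sum.inr, Sum.inr_injective⟩) with ht
  by_cases hall : ∀ s : Finset ↥A, s.card ≤ (s.biUnion t).card
  · left
    obtain ⟨F, hFinj, hFmem⟩ := (Finset.all_card_le_biUnion_card_iff_exists_injective t).1 hall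
    set SL : Finset ↥A := Finset.univ.filter (fun a => (F a).isLeft) with hSL
    set SR : Finset ↥A := Finset.univ.filter (fun a => ¬ (F a).isLeft) with hSR
    have hcardSR : SR.card ≤ k := by
      have himg : SR.image F ⊆
          (Finset.univ : Finset (Fin k)).map ⟨Sum.inr, Sum.inr_injective⟩ := by
        intro z hz
        obtain ⟨a, ha, rfl⟩ := Finset.mem_image.1 hz
        have hnl : ¬ (F a).isLeft := (Finset.mem_filter.1 ha).2
        match hFa : F a with
        | Sum.inl b => rw [hFa] at hnl; simp at hnl
        | Sum.inr i => exact Finset.mem_map.2 ⟨i, Finset.mem_univ i, rfl⟩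
      calc SR.card = (SR.image F).card :=
            (Finset.card_image_of_injective SR hFinj).symm
        _ ≤ k := le_trans (Finset.card_le_card himg) (by simp)
    have hcardSL : ρ ≤ SL.card := by
      have hsum : SL.card + SR.card = A.card := by
        rw [hSL, hSR, Finset.card_filter_add_card_filter_not]
        simp
      omega
    obtain ⟨SL', hSL'sub, hSL'card⟩ := Finset.exists_subset_card_eq hcardSL
    have e := SL'.equivFin
    set aa : Fin ρ → ↥A := fun i => (e.symm (Fin.cast hSL'card.symm i) : ↥SL') with haa
    have haainj : Function.Injective aa := by
      intro i j hij
      have h1 : e.symm (Fin.cast hSL'card.symm i) = e.symm (Fin.cast hSL'card.symm j) :=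
        Subtype.ext hij
      have h2 := e.symm.injective h1
      exact Fin.cast_injective _ h2
    have haaSL : ∀ i, aa i ∈ SL := fun i => hSL'sub (e.symm (Fin.cast hSL'card.symm i)).2
    set bl : ↥A → E := fun a => match F a with
      | Sum.inl b => b
      | Sum.inr _ => 0 with hbl
    have hblmem : ∀ a ∈ SL, F a = Sum.inl (bl a) := by
      intro a ha
      have hl : (F a).isLeft := (Finset.mem_filter.1 ha).2
      match hFa : F a with
      | Sum.inl b => simp [hbl, hFa]
      | Sum.inr i => rw [hFa] at hl; simp at hl
    have hblNb : ∀ a ∈ SL, bl a ∈ Nb (a : E) := by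
      intro a ha
      have hFm := hFmem a
      rw [ht] at hFm
      rw [hblmem a ha] at hFm
      rcases Finset.mem_union.1 hFm with h1 | h1
      · obtain ⟨b, hb, hbeq⟩ := Finset.mem_map.1 h1
        have hbb : b = bl a := by
          have : Sum.inl b = Sum.inl (bl a) := hbeq
          exact Sum.inl_injective this
        rwa [← hbb]
      · obtain ⟨i, _, habs⟩ := Finset.mem_map.1 h1
        simp at habs
    refine ⟨fun i => ((aa i : E), bl (aa i)), fun i => ⟨(aa i).2, hblNb _ (haaSL i)⟩, ?_⟩
    intro i j hij
    constructor
    · intro hcon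
      have hcon' : (aa i : E) = (aa j : E) := hcon
      exact hij (haainj (Subtype.ext hcon'))
    · intro hcon
      have hcon' : bl (aa i) = bl (aa j) := hcon
      apply hij
      apply haainj
      apply hFinj
      rw [hblmem _ (haaSL i), hblmem _ (haaSL j), hcon']
  · right
    push_neg at hall
    obtain ⟨s, hs⟩ := hall
    have hsne : s.Nonempty := by
      rcases Finset.eq_empty_or_nonempty s with rfl | h
      · simp at hs
      · exact h
    set NBs : Finset E := s.biUnion (fun a => Nb (a : E)) with hNBs
    have hbiU : s.biUnion t = (NBs.map ⟨Sum.inl, Sum.inl_injective⟩) ∪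
        ((Finset.univ : Finset (Fin k)).map ⟨Sum.inr, Sum.inr_injective⟩) := by
      ext z
      constructor
      · intro hz
        obtain ⟨a, ha, hz2⟩ := Finset.mem_biUnion.1 hz
        rw [ht] at hz2
        rcases Finset.mem_union.1 hz2 with h1 | h1
        · obtain ⟨b, hb, rfl⟩ := Finset.mem_map.1 h1
          exact Finset.mem_union_left _ (Finset.mem_map.2
            ⟨b, Finset.mem_biUnion.2 ⟨a, ha, hb⟩, rfl⟩)
        · exact Finset.mem_union_right _ h1
      · intro hz
        obtain ⟨a₀, ha₀⟩ := hsne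
        rcases Finset.mem_union.1 hz with h1 | h1
        · obtain ⟨b, hb, rfl⟩ := Finset.mem_map.1 h1
          obtain ⟨a, ha, hba⟩ := Finset.mem_biUnion.1 hb
          refine Finset.mem_biUnion.2 ⟨a, ha, ?_⟩
          rw [ht]
          exact Finset.mem_union_left _ (Finset.mem_map.2 ⟨b, hba, rfl⟩)
        · refine Finset.mem_biUnion.2 ⟨a₀, ha₀, ?_⟩
          rw [ht]
          exact Finset.mem_union_right _ h1
    have hdisj : Disjoint (NBs.map ⟨Sum.inl, Sum.inl_injective⟩)
        ((Finset.univ : Finset (Fin k)).map ⟨Sum.inr, Sum.inr_injective⟩) := by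
      rw [Finset.disjoint_left]
      rintro z hz1 hz2
      obtain ⟨b, _, rfl⟩ := Finset.mem_map.1 hz1
      obtain ⟨i, _, habs⟩ := Finset.mem_map.1 hz2
      simp at habs
    have hcards : NBs.card + k < s.card := by
      have h1 := hs
      rw [hbiU, Finset.card_union_of_disjoint hdisj, Finset.card_map, Finset.card_map,
        Finset.card_univ, Fintype.card_fin] at h1
      omega
    have hsA : s.card ≤ A.card := by
      calc s.card ≤ (Finset.univ : Finset ↥A).card :=
            Finset.card_le_card (Finset.subset_univ s)
        _ = A.card := by simp
    set simg : Finset E := s.image Subtype.val with hsimg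
    have hsimgcard : simg.card = s.card := by
      rw [hsimg]
      exact Finset.card_image_of_injective s Subtype.val_injective
    have hsimgA : simg ⊆ A := by
      intro z hz
      rw [hsimg] at hz
      obtain ⟨a, _, rfl⟩ := Finset.mem_image.1 hz
      exact a.2
    refine ⟨(A \ simg) ∪ NBs, ?_, ?_⟩
    · have h2 : (A \ simg).card = A.card - s.card := by
        rw [Finset.card_sdiff_of_subset hsimgA, hsimgcard]
      have h3 := Finset.card_union_le (A \ simg) NBs
      omega
    · intro a ha b hb
      by_cases has : a ∈ simg
      · refine Or.inr (Finset.mem_union_right _ ?_)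
        rw [hNBs]
        rw [hsimg] at has
        obtain ⟨a', ha', haeq⟩ := Finset.mem_image.1 has
        refine Finset.mem_biUnion.2 ⟨a', ha', by rwa [haeq]⟩
      · exact Or.inl (Finset.mem_union_left _ (Finset.mem_sdiff.2 ⟨ha, has⟩))

lemma finrank_vectorSpan_add_one_le_card {V : Finset E} (hVne : V.Nonempty) :
    finrank ℝ (vectorSpan ℝ (V : Set E)) + 1 ≤ V.card := by
  classical
  obtain ⟨v₀, hv₀⟩ := hVne
  have h1 : vectorSpan ℝ (V : Set E) =
      Submodule.span ℝ (((V.erase v₀).image (fun u => u - v₀) : Finset E) : Set E) := by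
    rw [vectorSpan_eq_span_vsub_set_right_ne ℝ (Finset.mem_coe.2 hv₀)]
    congr 1
    ext z
    constructor
    · rintro ⟨x, hx, rfl⟩
      obtain ⟨hxV, hxne⟩ := hx
      refine Finset.mem_coe.2 (Finset.mem_image.2 ⟨x, ?_, rfl⟩)
      exact Finset.mem_erase.2 ⟨by simpa using hxne, Finset.mem_coe.1 hxV⟩
    · intro hz
      obtain ⟨x, hx, rfl⟩ := Finset.mem_image.1 (Finset.mem_coe.1 hz)
      obtain ⟨hxne, hxV⟩ := Finset.mem_erase.1 hx
      exact ⟨x, ⟨Finset.mem_coe.2 hxV, by simpa using hxne⟩, rfl⟩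
  have h2 : Set.finrank ℝ (((V.erase v₀).image (fun u => u - v₀) : Finset E) : Set E)
      ≤ ((V.erase v₀).image (fun u => u - v₀)).card :=
    finrank_span_finset_le_card _
  have h2' : finrank ℝ (vectorSpan ℝ (V : Set E))
      ≤ ((V.erase v₀).image (fun u => u - v₀)).card := by
    rw [h1]
    exact h2
  have h3 : ((V.erase v₀).image (fun u => u - v₀)).card ≤ (V.erase v₀).card :=
    Finset.card_image_le
  have h4 : (V.erase v₀).card = V.card - 1 := Finset.card_erase_of_mem hv₀
  have h5 : 1 ≤ V.card := Finset.card_pos.2 ⟨v₀, hv₀⟩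
  omega

lemma assemble {V : Finset E} (r : ℕ) (S : Fin r → Finset E) (L : Fin r → (E →L[ℝ] ℝ))
    (hSL : ∀ j, mxS V (L j) = S j) (hSne : ∀ j, (S j).Nonempty)
    (hdisj : ∀ i j, i ≠ j → ∀ x, x ∈ S i → x ∈ S j → False)
    {f : E → ℝ} {c : ℝ} (hc : ∀ j, c ∈ f '' convexHull ℝ ((S j : Finset E) : Set E)) :
    ∃ F : Fin r → Set E,
      (∀ j, IsExposed ℝ (convexHull ℝ (V : Set E)) (F j)) ∧
      (∀ j, (F j).Nonempty) ∧
      Pairwise (Function.onFun Disjoint F) ∧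
      (⋂ j, f '' F j).Nonempty := by
  refine ⟨fun j => convexHull ℝ ((S j : Finset E) : Set E), ?_, ?_, ?_, ?_⟩
  · intro j
    have h := isExposed_mxS V (L j)
    rwa [hSL j] at h
  · intro j
    obtain ⟨x, hx⟩ := hSne j
    exact ⟨x, subset_convexHull ℝ _ (Finset.mem_coe.2 hx)⟩
  · intro i j hij
    have h := hull_mxS_disjoint (V := V) (l₁ := L i) (l₂ := L j) (by
      rw [hSL i, hSL j]
      exact hdisj i j hij)
    rw [hSL i, hSL j] at h
    exact h
  · exact ⟨c, Set.mem_iInter.2 hc⟩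

end

/-- Tverberg theorem for triangle-free polytopes, `d = 1`: let `P = conv V` be a polytope
of dimension at least `r` whose vertex set is `V` and whose 1-skeleton is triangle-free
(no three distinct vertices are pairwise joined by edges of `P`).  Then for every
`f : ℝ^N → ℝ` continuous on `P` there are `r` pairwise disjoint (nonempty, exposed) faces
of `P` whose images under `f` intersect. -/
theorem tverberg_triangle_free_polytope (r N : ℕ) (hr : 1 ≤ r)
    (V : Finset (EuclideanSpace ℝ (Fin N)))
    (hdim : r ≤
      Module.finrank ℝ (affineSpan ℝ (V : Set (EuclideanSpace ℝ (Fin N)))).direction)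
    (hvert : (V : Set (EuclideanSpace ℝ (Fin N))) =
      Set.extremePoints ℝ (convexHull ℝ (V : Set (EuclideanSpace ℝ (Fin N)))))
    (htrianglefree : ¬ ∃ u ∈ V, ∃ v ∈ V, ∃ w ∈ V, u ≠ v ∧ u ≠ w ∧ v ≠ w ∧
      IsExposed ℝ (convexHull ℝ (V : Set (EuclideanSpace ℝ (Fin N))))
        (convexHull ℝ {u, v}) ∧
      IsExposed ℝ (convexHull ℝ (V : Set (EuclideanSpace ℝ (Fin N))))
        (convexHull ℝ {u, w}) ∧
      IsExposed ℝ (convexHull ℝ (V : Set (EuclideanSpace ℝ (Fin N))))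
        (convexHull ℝ {v, w}))
    (f : EuclideanSpace ℝ (Fin N) → ℝ)
    (hf : ContinuousOn f (convexHull ℝ (V : Set (EuclideanSpace ℝ (Fin N))))) :
    ∃ F : Fin r → Set (EuclideanSpace ℝ (Fin N)),
      (∀ j, IsExposed ℝ (convexHull ℝ (V : Set (EuclideanSpace ℝ (Fin N)))) (F j)) ∧
      (∀ j, (F j).Nonempty) ∧
      Pairwise (Function.onFun Disjoint F) ∧
      (⋂ j, f '' F j).Nonempty := by
  classical
  have hV : IsVert V := hvert
  have hdim' : r ≤ finrank ℝ (vectorSpan ℝ (V : Set (EuclideanSpace ℝ (Fin N)))) := by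
    rwa [direction_affineSpan] at hdim
  have hVne : V.Nonempty := by
    rcases Finset.eq_empty_or_nonempty V with rfl | h
    · exfalso
      have hbot : vectorSpan ℝ ((∅ : Finset (EuclideanSpace ℝ (Fin N))) :
          Set (EuclideanSpace ℝ (Fin N))) = ⊥ := by
        simp [vectorSpan_def]
      rw [hbot] at hdim'
      rw [finrank_bot] at hdim'
      omega
    · exact h
  have hcardV : finrank ℝ (vectorSpan ℝ (V : Set (EuclideanSpace ℝ (Fin N)))) + 1 ≤ V.card :=
    finrank_vectorSpan_add_one_le_card hVne
  have htf : ∀ u ∈ V, ∀ v ∈ V, ∀ w ∈ V,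
      Adj V u v → Adj V u w → Adj V v w → False := by
    intro u hu v hv w hw huv huw hvw
    exact htrianglefree ⟨u, hu, v, hv, w, hw, huv.1, huw.1, hvw.1,
      huv.isExposed, huw.isExposed, hvw.isExposed⟩
  have hdeg : ∀ v ∈ V, finrank ℝ (vectorSpan ℝ (V : Set (EuclideanSpace ℝ (Fin N))))
      ≤ (V.filter (fun u => Adj V v u)).card := by
    intro v hvV
    by_contra hcon
    push_neg at hcon
    have hvC : v ∉ V.filter (fun u => Adj V v u) := by
      intro hmem
      exact (Finset.mem_filter.1 hmem).2.1 rfl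
    have hbig : 1 < (V \ V.filter (fun u => Adj V v u)).card := by
      have h1 : (V \ V.filter (fun u => Adj V v u)).card
          = V.card - (V.filter (fun u => Adj V v u)).card :=
        Finset.card_sdiff_of_subset (Finset.filter_subset _ _)
      omega
    obtain ⟨q, hq, hqv⟩ := Finset.exists_mem_ne hbig v
    obtain ⟨hqV, hqC⟩ := Finset.mem_sdiff.1 hq
    have hreach := balinski hV (V.filter (fun u => Adj V v u)) (Finset.filter_subset _ _)
      (by omega) v hvV hvC q hqV hqC
    rcases Relation.ReflTransGen.cases_head hreach with heq | ⟨z, hstep, -⟩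
    · exact hqv heq.symm
    · obtain ⟨hadj, -, hzV, hzC⟩ := hstep
      exact hzC (Finset.mem_filter.2 ⟨hzV, hadj⟩)
  have h2d : 2 * r ≤ V.card := by
    obtain ⟨u₀, hu₀⟩ := hVne
    have hdeg0 := hdeg u₀ hu₀
    have hne0 : (V.filter (fun u => Adj V u₀ u)).Nonempty := by
      rw [← Finset.card_pos]
      omega
    obtain ⟨v₀, hv₀⟩ := hne0
    obtain ⟨hv₀V, hadj0⟩ := Finset.mem_filter.1 hv₀
    have hdisjN : Disjoint (V.filter (fun u => Adj V u₀ u)) (V.filter (fun u => Adj V v₀ u)) := by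
      rw [Finset.disjoint_left]
      intro w hw1 hw2
      obtain ⟨hwV, hadj1⟩ := Finset.mem_filter.1 hw1
      obtain ⟨-, hadj2⟩ := Finset.mem_filter.1 hw2
      exact htf u₀ hu₀ v₀ hv₀V w hwV hadj0 hadj1 hadj2
    have hsub : (V.filter (fun u => Adj V u₀ u)) ∪ (V.filter (fun u => Adj V v₀ u)) ⊆ V := by
      intro x hx
      rcases Finset.mem_union.1 hx with h | h
      · exact (Finset.mem_filter.1 h).1
      · exact (Finset.mem_filter.1 h).1
    have hcard := Finset.card_le_card hsub
    rw [Finset.card_union_of_disjoint hdisjN] at hcard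
    have hdegv := hdeg v₀ hv₀V
    omega
  have hsing : ∀ w ∈ V, ∃ l : EuclideanSpace ℝ (Fin N) →L[ℝ] ℝ, mxS V l = {w} := by
    intro w hw
    obtain ⟨h, hsep⟩ := sep_vertex hV hw
    exact ⟨h, mxS_eq_singleton hw hsep⟩
  by_cases hbig : ∃ c : ℝ, r ≤ (V.filter (fun v => f v = c)).card
  · obtain ⟨c, hc⟩ := hbig
    obtain ⟨T', hT'sub, hT'card⟩ := Finset.exists_subset_card_eq hc
    have eT := T'.equivFin
    set wS : Fin r → EuclideanSpace ℝ (Fin N) :=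
      fun i => (eT.symm (Fin.cast hT'card.symm i) : EuclideanSpace ℝ (Fin N)) with hwS
    have hwSmem : ∀ i, wS i ∈ T' := fun i => (eT.symm (Fin.cast hT'card.symm i)).2
    have hwSV : ∀ i, wS i ∈ V :=
      fun i => (Finset.mem_filter.1 (hT'sub (hwSmem i))).1
    have hwSval : ∀ i, f (wS i) = c :=
      fun i => (Finset.mem_filter.1 (hT'sub (hwSmem i))).2
    have hwSinj : Function.Injective wS := by
      intro i j hij
      have h1 := eT.symm.injective (Subtype.ext hij)
      exact Fin.cast_injective _ h1
    choose L hL using fun i => hsing (wS i) (hwSV i)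
    refine assemble r (fun i => {wS i}) L hL
      (fun i => ⟨wS i, Finset.mem_singleton_self _⟩) ?_ (c := c) ?_
    · intro i j hij x hxi hxj
      rw [Finset.mem_singleton] at hxi hxj
      subst hxi
      exact hij (hwSinj hxj.symm).symm
    · intro j
      rw [Finset.coe_singleton, convexHull_singleton]
      exact ⟨wS j, rfl, hwSval j⟩
  · push_neg at hbig
    have hvne : (V.image f).Nonempty := hVne.image f
    have hvalne : ((V.image f).filter
        (fun c => r ≤ (V.filter (fun v => f v ≤ c)).card)).Nonempty := by
      refine ⟨(V.image f).max' hvne, Finset.mem_filter.2 ⟨Finset.max'_mem _ _, ?_⟩⟩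
      have hfil : V.filter (fun v => f v ≤ (V.image f).max' hvne) = V := by
        apply Finset.filter_true_of_mem
        intro x hx
        exact Finset.le_max' _ _ (Finset.mem_image_of_mem f hx)
      rw [hfil]
      omega
    set cstar : ℝ := ((V.image f).filter
      (fun c => r ≤ (V.filter (fun v => f v ≤ c)).card)).min' hvalne with hcstar
    have hcmem := Finset.min'_mem ((V.image f).filter
      (fun c => r ≤ (V.filter (fun v => f v ≤ c)).card)) hvalne
    have hcval : cstar ∈ V.image f := (Finset.mem_filter.1 hcmem).1
    have hccnt : r ≤ (V.filter (fun v => f v ≤ cstar)).card := (Finset.mem_filter.1 hcmem).2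
    have hminim : ∀ c ∈ V.image f, c < cstar → (V.filter (fun v => f v ≤ c)).card ≤ r - 1 := by
      intro c hcv hlt
      by_contra hcon
      push_neg at hcon
      have hmem2 : c ∈ (V.image f).filter (fun c => r ≤ (V.filter (fun v => f v ≤ c)).card) :=
        Finset.mem_filter.2 ⟨hcv, by omega⟩
      exact absurd (Finset.min'_le _ _ hmem2) (not_le.2 hlt)
    set T : Finset (EuclideanSpace ℝ (Fin N)) := V.filter (fun v => f v = cstar) with hT
    set A : Finset (EuclideanSpace ℝ (Fin N)) := V.filter (fun v => f v < cstar) with hA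
    set B : Finset (EuclideanSpace ℝ (Fin N)) := V.filter (fun v => cstar < f v) with hB
    have hμbound : T.card ≤ r - 1 := by
      have hb := hbig cstar
      rw [← hT] at hb
      omega
    have hcntsplit : V.filter (fun v => f v ≤ cstar) = A ∪ T := by
      ext x
      simp only [hA, hT, Finset.mem_filter, Finset.mem_union]
      constructor
      · rintro ⟨hxV, hle⟩
        rcases lt_or_eq_of_le hle with h | h
        · exact Or.inl ⟨hxV, h⟩
        · exact Or.inr ⟨hxV, h⟩
      · rintro (⟨hxV, h⟩ | ⟨hxV, h⟩)
        · exact ⟨hxV, le_of_lt h⟩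
        · exact ⟨hxV, le_of_eq h⟩
    have hATdisj : Disjoint A T := by
      rw [Finset.disjoint_left]
      intro x hx1 hx2
      have h1 := (Finset.mem_filter.1 hx1).2
      have h2 := (Finset.mem_filter.1 hx2).2
      rw [h2] at h1
      exact lt_irrefl _ h1
    have hcnteq : (V.filter (fun v => f v ≤ cstar)).card = A.card + T.card := by
      rw [hcntsplit, Finset.card_union_of_disjoint hATdisj]
    have hAcard : A.card ≤ r - 1 := by
      rcases Finset.eq_empty_or_nonempty A with he | hAne
      · rw [he]
        simp
      · have hAim : (A.image f).Nonempty := hAne.image f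
        obtain ⟨a', ha'A, ha'val⟩ := Finset.mem_image.1 ((A.image f).max'_mem hAim)
        have hc'val : (A.image f).max' hAim ∈ V.image f := by
          rw [← ha'val]
          exact Finset.mem_image_of_mem f (Finset.mem_filter.1 ha'A).1
        have hc'lt : (A.image f).max' hAim < cstar := by
          rw [← ha'val]
          exact (Finset.mem_filter.1 ha'A).2
        have hsub2 : A ⊆ V.filter (fun v => f v ≤ (A.image f).max' hAim) := by
          intro x hx
          refine Finset.mem_filter.2 ⟨(Finset.mem_filter.1 hx).1, ?_⟩
          exact Finset.le_max' _ _ (Finset.mem_image_of_mem f hx)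
        have hcard2 := Finset.card_le_card hsub2
        have hcard3 := hminim _ hc'val hc'lt
        omega
    have hccnt' : r ≤ A.card + T.card := by rw [← hcnteq]; exact hccnt
    set μ : ℕ := T.card with hμdef
    set ρ : ℕ := r - μ with hρdef
    have hρpos : 1 ≤ ρ := by omega
    have hρA : ρ ≤ A.card := by omega
    have hpart : V = A ∪ T ∪ B := by
      ext x
      simp only [hA, hT, hB, Finset.mem_union, Finset.mem_filter]
      constructor
      · intro hx
        rcases lt_trichotomy (f x) cstar with h | h | h
        · exact Or.inl (Or.inl ⟨hx, h⟩)
        · exact Or.inl (Or.inr ⟨hx, h⟩)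
        · exact Or.inr ⟨hx, h⟩
      · rintro ((⟨h, -⟩ | ⟨h, -⟩) | ⟨h, -⟩) <;> exact h
    have hABdisj : Disjoint (A ∪ T) B := by
      rw [Finset.disjoint_left]
      intro x hx1 hx2
      have h2 := (Finset.mem_filter.1 hx2).2
      rcases Finset.mem_union.1 hx1 with h | h
      · have h1 := (Finset.mem_filter.1 h).2
        linarith
      · have h1 := (Finset.mem_filter.1 h).2
        linarith
    have hcardpart : V.card = A.card + μ + B.card := by
      conv_lhs => rw [hpart]
      rw [Finset.card_union_of_disjoint hABdisj, Finset.card_union_of_disjoint hATdisj]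
    have hBcard : ρ + 1 ≤ B.card := by omega
    rcases matching_or_cover A (fun a => B.filter (fun b => Adj V a b)) ρ hρA with
      ⟨g, hgmem, hginj⟩ | ⟨Cv, hCvcard, hCvcover⟩
    · have hrsum : μ + ρ = r := by omega
      have eT := T.equivFin
      set wS : Fin μ → EuclideanSpace ℝ (Fin N) :=
        fun i => (eT.symm (Fin.cast hμdef i) : EuclideanSpace ℝ (Fin N)) with hwS
      have hwSmem : ∀ i, wS i ∈ T := fun i => (eT.symm _).2
      have hwSV : ∀ i, wS i ∈ V := fun i => (Finset.mem_filter.1 (hwSmem i)).1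
      have hwSval : ∀ i, f (wS i) = cstar := fun i => (Finset.mem_filter.1 (hwSmem i)).2
      have hwSinj : Function.Injective wS := by
        intro i j hij
        exact Fin.cast_injective _ (eT.symm.injective (Subtype.ext hij))
      have hga : ∀ i, (g i).1 ∈ A := fun i => (hgmem i).1
      have hgb : ∀ i, (g i).2 ∈ B ∧ Adj V (g i).1 (g i).2 := by
        intro i
        have h := (hgmem i).2
        exact ⟨(Finset.mem_filter.1 h).1, (Finset.mem_filter.1 h).2⟩
      have hgaV : ∀ i, (g i).1 ∈ V := fun i => (Finset.mem_filter.1 (hga i)).1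
      have hgbV : ∀ i, (g i).2 ∈ V := fun i => (Finset.mem_filter.1 (hgb i).1).1
      have hgaval : ∀ i, f (g i).1 < cstar := fun i => (Finset.mem_filter.1 (hga i)).2
      have hgbval : ∀ i, cstar < f (g i).2 := fun i => (Finset.mem_filter.1 (hgb i).1).2
      choose Ls hLs using fun i : Fin μ => hsing (wS i) (hwSV i)
      choose Le hLe using fun i : Fin ρ => (hgb i).2.2
      set dec : Fin r → Fin μ ⊕ Fin ρ := fun j => finSumFinEquiv.symm (Fin.cast hrsum.symm j)
        with hdec
      have hdecinj : Function.Injective dec := by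
        intro i j hij
        exact Fin.cast_injective _ (finSumFinEquiv.symm.injective hij)
      refine assemble r
        (fun j => Sum.elim (fun i => ({wS i} : Finset (EuclideanSpace ℝ (Fin N))))
          (fun i => {(g i).1, (g i).2}) (dec j))
        (fun j => Sum.elim Ls Le (dec j)) ?_ ?_ ?_ (c := cstar) ?_
      · intro j
        beta_reduce
        rcases hdj : dec j with i | i
        · simp only [Sum.elim_inl]
          exact hLs i
        · simp only [Sum.elim_inr]
          convert hLe i
      · intro j
        beta_reduce
        rcases hdj : dec j with i | i
        · exact ⟨wS i, by simp⟩
        · exact ⟨(g i).1, by simp⟩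
      · intro i j hij x hxi hxj
        have hdecne : dec i ≠ dec j := fun h => hij (hdecinj h)
        beta_reduce at hxi hxj
        rcases hdi : dec i with i' | i' <;> rw [hdi] at hxi <;>
          rcases hdj : dec j with j' | j' <;> rw [hdj] at hxj <;>
          simp only [Sum.elim_inl, Sum.elim_inr] at hxi hxj
        · rw [Finset.mem_singleton] at hxi hxj
          subst hxi
          have heq : i' = j' := hwSinj hxj
          exact hdecne (by rw [hdi, hdj, heq])
        · rw [Finset.mem_singleton] at hxi
          subst hxi
          rcases Finset.mem_insert.1 hxj with h | h
          · have hv1 := hgaval j'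
            have hv2 := hwSval i'
            rw [← h] at hv1
            linarith
          · rw [Finset.mem_singleton] at h
            have hv1 := hgbval j'
            have hv2 := hwSval i'
            rw [← h] at hv1
            linarith
        · rw [Finset.mem_singleton] at hxj
          subst hxj
          rcases Finset.mem_insert.1 hxi with h | h
          · have hv1 := hgaval i'
            have hv2 := hwSval j'
            rw [← h] at hv1
            linarith
          · rw [Finset.mem_singleton] at h
            have hv1 := hgbval i'
            have hv2 := hwSval j'
            rw [← h] at hv1
            linarith
        · have hne' : i' ≠ j' := by
            intro h
            exact hdecne (by rw [hdi, hdj, h])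
          obtain ⟨hane, hbne⟩ := hginj i' j' hne'
          rcases Finset.mem_insert.1 hxi with h1 | h1
          · rcases Finset.mem_insert.1 hxj with h2 | h2
            · exact hane (by rw [← h1, ← h2])
            · rw [Finset.mem_singleton] at h2
              have hv1 := hgaval i'
              have hv2 := hgbval j'
              rw [← h1] at hv1
              rw [← h2] at hv2
              linarith
          · rw [Finset.mem_singleton] at h1
            rcases Finset.mem_insert.1 hxj with h2 | h2
            · have hv1 := hgbval i'
              have hv2 := hgaval j'
              rw [← h1] at hv1
              rw [← h2] at hv2
              linarith
            · rw [Finset.mem_singleton] at h2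
              exact hbne (by rw [← h1, ← h2])
      · intro j
        beta_reduce
        rcases hdj : dec j with i | i
        · simp only [Sum.elim_inl]
          rw [Finset.coe_singleton, convexHull_singleton]
          exact ⟨wS i, rfl, hwSval i⟩
        · simp only [Sum.elim_inr]
          have hco : (({(g i).1, (g i).2} : Finset (EuclideanSpace ℝ (Fin N))) :
              Set (EuclideanSpace ℝ (Fin N))) = {(g i).1, (g i).2} := by
            simp
          rw [hco]
          exact ivt_edge hf (hgaV i) (hgbV i) (le_of_lt (hgaval i)) (le_of_lt (hgbval i))
    · exfalso
      have hDV : (Cv ∩ V) ∪ T ⊆ V := by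
        intro x hx
        rcases Finset.mem_union.1 hx with h | h
        · exact (Finset.mem_inter.1 h).2
        · exact (Finset.mem_filter.1 h).1
      have hDcard : ((Cv ∩ V) ∪ T).card + 1 ≤
          finrank ℝ (vectorSpan ℝ (V : Set (EuclideanSpace ℝ (Fin N)))) := by
        have h1 := Finset.card_union_le (Cv ∩ V) T
        have h2 : (Cv ∩ V).card ≤ Cv.card := Finset.card_le_card Finset.inter_subset_left
        omega
      have hAD : ¬ A ⊆ (Cv ∩ V) ∪ T := by
        intro hsub
        have hACv : A ⊆ Cv ∩ V := by
          intro x hx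
          rcases Finset.mem_union.1 (hsub hx) with h | h
          · exact h
          · exfalso
            have h1 := (Finset.mem_filter.1 hx).2
            have h2 := (Finset.mem_filter.1 h).2
            rw [h2] at h1
            exact lt_irrefl _ h1
        have := Finset.card_le_card hACv
        have h2 : (Cv ∩ V).card ≤ Cv.card := Finset.card_le_card Finset.inter_subset_left
        omega
      obtain ⟨astar, haA, haD⟩ := Finset.not_subset.1 hAD
      have hBD : ¬ B ⊆ (Cv ∩ V) ∪ T := by
        intro hsub
        have hBCv : B ⊆ Cv ∩ V := by
          intro x hx
          rcases Finset.mem_union.1 (hsub hx) with h | h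
          · exact h
          · exfalso
            have h1 := (Finset.mem_filter.1 hx).2
            have h2 := (Finset.mem_filter.1 h).2
            rw [h2] at h1
            exact lt_irrefl _ h1
        have := Finset.card_le_card hBCv
        have h2 : (Cv ∩ V).card ≤ Cv.card := Finset.card_le_card Finset.inter_subset_left
        omega
      obtain ⟨bstar, hbB, hbD⟩ := Finset.not_subset.1 hBD
      have hreach := balinski hV ((Cv ∩ V) ∪ T) hDV hDcard astar
        ((Finset.mem_filter.1 haA).1) haD bstar ((Finset.mem_filter.1 hbB).1) hbD
      have hcross : ∀ x y : EuclideanSpace ℝ (Fin N),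
          Reach V ((Cv ∩ V) ∪ T) x y → f x < cstar → cstar < f y → False := by
        intro x y h
        induction h with
        | refl =>
          intro h1 h2
          linarith
        | @tail b c hxb hbc ih =>
          intro h1 h2
          obtain ⟨hadj, ⟨hbV, hbD⟩, hcV, hcD⟩ := hbc
          have hbval : f b ≠ cstar := by
            intro hcon
            exact hbD (Finset.mem_union_right _ (Finset.mem_filter.2 ⟨hbV, hcon⟩))
          rcases lt_or_gt_of_ne hbval with hlt | hgt
          · have hbA : b ∈ A := Finset.mem_filter.2 ⟨hbV, hlt⟩
            have hcB : c ∈ B := Finset.mem_filter.2 ⟨hcV, h2⟩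
            have hcNb : c ∈ B.filter (fun b' => Adj V b b') :=
              Finset.mem_filter.2 ⟨hcB, hadj⟩
            rcases hCvcover b hbA c hcNb with h | h
            · exact hbD (Finset.mem_union_left _ (Finset.mem_inter.2 ⟨h, hbV⟩))
            · exact hcD (Finset.mem_union_left _ (Finset.mem_inter.2 ⟨h, hcV⟩))
          · exact ih h1 hgt
      exact hcross astar bstar hreach ((Finset.mem_filter.1 haA).2) ((Finset.mem_filter.1 hbB).2)
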